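/- arXiv:1607.08782 — 3 statements merged into one kernel-verified Lean document; each statement's English description precedes it below -/
import Mathlib

section
/- There is a constant C > 0 such that for every n ≥ 2 the number of labelled bipartite graphs on vertex set {1,…,n}, given together with a bipartition of {1,…,n} into two independent parts, that are chain-decomposable is at most n^{C·n}. -/
universe u

/-- `X` is complete to `Y` in `G`: every vertex of `X` is adjacent to every vertex of `Y`. -/
def CompleteTo {V : Type u} (G : SimpleGraph V) (X Y : Set V) : Prop :=
  ∀ ⦃x⦄, x ∈ X → ∀ ⦃y⦄, y ∈ Y → G.Adj x y

/-- `X` is anticomplete to `Y` in `G`. -/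
def AnticompleteTo {V : Type u} (G : SimpleGraph V) (X Y : Set V) : Prop :=
  ∀ ⦃x⦄, x ∈ X → ∀ ⦃y⦄, y ∈ Y → ¬ G.Adj x y

/-- `(U, W)` is a bipartition of the vertex set of `G` into two independent sets. -/
structure IsBipartition {V : Type u} (G : SimpleGraph V) (U W : Set V) : Prop where
  union_eq : U ∪ W = Set.univ
  disjoint : Disjoint U W
  cross : ∀ ⦃x y⦄, G.Adj x y → (x ∈ U ∧ y ∈ W) ∨ (x ∈ W ∧ y ∈ U)

/-- `G` contains an induced subgraph isomorphic to `H`. -/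
def HasInducedCopy {α : Type*} {V : Type u} (H : SimpleGraph α) (G : SimpleGraph V) : Prop :=
  ∃ f : α ↪ V, ∀ a b : α, G.Adj (f a) (f b) ↔ H.Adj a b

/-- `G` has no induced subgraph isomorphic to the chordless path `P_m` on `m` vertices. -/
def PathFree (m : ℕ) {V : Type u} (G : SimpleGraph V) : Prop :=
  ¬ HasInducedCopy (SimpleGraph.pathGraph m) G

/-- `G` is bipartite: its vertex set can be partitioned into (at most) two independent sets. -/
def Bipartite {V : Type u} (G : SimpleGraph V) : Prop :=
  ∃ U W : Set V, IsBipartition G U W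

/-- The bipartite complement of `G` with respect to the parts `U` and `W`:
`u ∈ U` and `w ∈ W` are adjacent iff they are non-adjacent in `G`. -/
def bipComplOn {V : Type u} (G : SimpleGraph V) (U W : Set V) : SimpleGraph V where
  Adj x y := ((x ∈ U ∧ y ∈ W) ∨ (x ∈ W ∧ y ∈ U)) ∧ x ≠ y ∧ ¬ G.Adj x y
  symm := ⟨by
    rintro x y ⟨h1, h2, h3⟩
    exact ⟨by tauto, h2.symm, fun h => h3 h.symm⟩⟩
  loopless := ⟨by rintro x ⟨_, h, _⟩; exact h rfl⟩

/-- A `k`-chain decomposition `[(A_1,…,A_k)(B_1,…,B_k)(C_1,…,C_k)(D_1,…,D_k)]` of a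
bipartite graph `G` with ordered parts `(U, W)`.  The sets are indexed by `1, …, k`. -/
structure IsChainDecomp {V : Type u} (G : SimpleGraph V) (U W : Set V) (k : ℕ)
    (A B C D : ℕ → Set V) : Prop where
  one_le : 1 ≤ k
  /-- `A_1, …, A_k, C_1, …, C_k` cover `U`. -/
  U_eq : (⋃ i ∈ Set.Icc 1 k, A i) ∪ (⋃ i ∈ Set.Icc 1 k, C i) = U
  /-- `B_1, …, B_k, D_1, …, D_k` cover `W`. -/
  W_eq : (⋃ i ∈ Set.Icc 1 k, B i) ∪ (⋃ i ∈ Set.Icc 1 k, D i) = W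
  /-- the sets `A_1, …, A_k, C_1, …, C_k` are pairwise disjoint. -/
  disjU : ∀ i ∈ Set.Icc 1 k, ∀ j ∈ Set.Icc 1 k,
      (i ≠ j → Disjoint (A i) (A j) ∧ Disjoint (C i) (C j)) ∧ Disjoint (A i) (C j)
  /-- the sets `B_1, …, B_k, D_1, …, D_k` are pairwise disjoint. -/
  disjW : ∀ i ∈ Set.Icc 1 k, ∀ j ∈ Set.Icc 1 k,
      (i ≠ j → Disjoint (B i) (B j) ∧ Disjoint (D i) (D j)) ∧ Disjoint (B i) (D j)
  /-- for every `i ≤ k-1` the sets `A_i, B_i, C_i, D_i` are non-empty. -/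
  nonempty_of_lt : ∀ i, 1 ≤ i → i < k →
      (A i).Nonempty ∧ (B i).Nonempty ∧ (C i).Nonempty ∧ (D i).Nonempty
  /-- for `i = k`, at least one of `A_k, B_k, C_k, D_k` is non-empty. -/
  nonempty_last : (A k).Nonempty ∨ (B k).Nonempty ∨ (C k).Nonempty ∨ (D k).Nonempty
  /-- every vertex of `B_i` has a neighbour in `A_i`. -/
  B_nbr : ∀ i ∈ Set.Icc 1 k, ∀ b ∈ B i, ∃ a ∈ A i, G.Adj a b
  /-- every vertex of `D_i` has a neighbour in `C_i`. -/
  D_nbr : ∀ i ∈ Set.Icc 1 k, ∀ d ∈ D i, ∃ c ∈ C i, G.Adj c d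
  /-- for `2 ≤ i ≤ k-1`, every vertex of `A_i` has a non-neighbour in `B_{i-1}`. -/
  A_nonnbr : ∀ i, 2 ≤ i → i < k → ∀ a ∈ A i, ∃ b ∈ B (i - 1), ¬ G.Adj a b
  /-- for `2 ≤ i ≤ k-1`, every vertex of `C_i` has a non-neighbour in `D_{i-1}`. -/
  C_nonnbr : ∀ i, 2 ≤ i → i < k → ∀ c ∈ C i, ∃ d ∈ D (i - 1), ¬ G.Adj c d
  /-- `A_i` is anticomplete to `B_j` for `j > i` and complete to `B_j` for `j < i-1`. -/
  AB : ∀ i ∈ Set.Icc 1 k, ∀ j ∈ Set.Icc 1 k,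
      (i < j → AnticompleteTo G (A i) (B j)) ∧ (j + 1 < i → CompleteTo G (A i) (B j))
  /-- `C_i` is anticomplete to `D_j` for `j > i` and complete to `D_j` for `j < i-1`. -/
  CD : ∀ i ∈ Set.Icc 1 k, ∀ j ∈ Set.Icc 1 k,
      (i < j → AnticompleteTo G (C i) (D j)) ∧ (j + 1 < i → CompleteTo G (C i) (D j))
  /-- `A_i` is complete to `D_j` for `j < i` and anticomplete to `D_j` for `j ≥ i`. -/
  AD : ∀ i ∈ Set.Icc 1 k, ∀ j ∈ Set.Icc 1 k,
      (j < i → CompleteTo G (A i) (D j)) ∧ (i ≤ j → AnticompleteTo G (A i) (D j))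
  /-- `C_i` is complete to `B_j` for `j < i` and anticomplete to `B_j` for `j ≥ i`. -/
  CB : ∀ i ∈ Set.Icc 1 k, ∀ j ∈ Set.Icc 1 k,
      (j < i → CompleteTo G (C i) (B j)) ∧ (i ≤ j → AnticompleteTo G (C i) (B j))

/-- `G`, with ordered parts `(U, W)`, admits a `k`-chain decomposition for some `k ≥ 1`. -/
def HasChainDecompOriented {V : Type u} (G : SimpleGraph V) (U W : Set V) : Prop :=
  ∃ k : ℕ, ∃ A B C D : ℕ → Set V, IsChainDecomp G U W k A B C D

/-- `G` admits a chain decomposition, either with respect to `(U, W)` (left)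
or with respect to `(W, U)` (right). -/
def HasChainDecomp {V : Type u} (G : SimpleGraph V) (U W : Set V) : Prop :=
  HasChainDecompOriented G U W ∨ HasChainDecompOriented G W U

/-- A bipartite graph (given inside an ambient graph `G` by its ordered parts `(U, W)`)
is chain-decomposable if it can be totally decomposed into single vertices by repeatedly
taking connected components (of the graph or of its bipartite complement) or the two
components of a `k`-chain decomposition (`k ≥ 2`, of the graph or of its bipartite
complement) augmented with marker vertices `v₁ ∈ D_1`, `v₂ ∈ B_1`. -/
inductive ChainDecomposable {V : Type u} : SimpleGraph V → Set V → Set V → Prop where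
  /-- a graph with exactly one vertex is chain-decomposable. -/
  | single (G : SimpleGraph V) (U W : Set V) (v : V) (h : U ∪ W = {v}) :
      ChainDecomposable G U W
  /-- `G` is the disjoint union of two chain-decomposable induced bipartite subgraphs. -/
  | union (G : SimpleGraph V) (U₁ W₁ U₂ W₂ : Set V)
      (hd : Disjoint (U₁ ∪ W₁) (U₂ ∪ W₂))
      (hne₁ : (U₁ ∪ W₁).Nonempty) (hne₂ : (U₂ ∪ W₂).Nonempty)
      (hanti : AnticompleteTo G (U₁ ∪ W₁) (U₂ ∪ W₂))
      (h₁ : ChainDecomposable G U₁ W₁) (h₂ : ChainDecomposable G U₂ W₂) :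
      ChainDecomposable G (U₁ ∪ U₂) (W₁ ∪ W₂)
  /-- the bipartite complement of `G` is the disjoint union of two chain-decomposable
  induced bipartite subgraphs. -/
  | counion (G : SimpleGraph V) (U₁ W₁ U₂ W₂ : Set V)
      (hd : Disjoint (U₁ ∪ W₁) (U₂ ∪ W₂))
      (hne₁ : (U₁ ∪ W₁).Nonempty) (hne₂ : (U₂ ∪ W₂).Nonempty)
      (hanti : AnticompleteTo (bipComplOn G (U₁ ∪ U₂) (W₁ ∪ W₂)) (U₁ ∪ W₁) (U₂ ∪ W₂))
      (h₁ : ChainDecomposable (bipComplOn G (U₁ ∪ U₂) (W₁ ∪ W₂)) U₁ W₁)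
      (h₂ : ChainDecomposable (bipComplOn G (U₁ ∪ U₂) (W₁ ∪ W₂)) U₂ W₂) :
      ChainDecomposable G (U₁ ∪ U₂) (W₁ ∪ W₂)
  /-- `G` admits a left `k`-chain decomposition with `k ≥ 2` whose two components,
  augmented with the marker vertices `v₁ ∈ D_1` and `v₂ ∈ B_1`, are chain-decomposable. -/
  | chainLeft (G : SimpleGraph V) (U W : Set V) (k : ℕ) (A B C D : ℕ → Set V) (v₁ v₂ : V)
      (hk : 2 ≤ k) (hdec : IsChainDecomp G U W k A B C D)
      (hv₁ : v₁ ∈ D 1) (hv₂ : v₂ ∈ B 1)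
      (h₁ : ChainDecomposable G (⋃ i ∈ Set.Icc 1 k, A i)
        ((⋃ i ∈ Set.Icc 1 k, B i) ∪ {v₁}))
      (h₂ : ChainDecomposable G (⋃ i ∈ Set.Icc 1 k, C i)
        ((⋃ i ∈ Set.Icc 1 k, D i) ∪ {v₂})) :
      ChainDecomposable G U W
  /-- `G` admits a right `k`-chain decomposition with `k ≥ 2` whose two components,
  augmented with the marker vertices `v₁ ∈ D_1` and `v₂ ∈ B_1`, are chain-decomposable. -/
  | chainRight (G : SimpleGraph V) (U W : Set V) (k : ℕ) (A B C D : ℕ → Set V) (v₁ v₂ : V)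
      (hk : 2 ≤ k) (hdec : IsChainDecomp G W U k A B C D)
      (hv₁ : v₁ ∈ D 1) (hv₂ : v₂ ∈ B 1)
      (h₁ : ChainDecomposable G ((⋃ i ∈ Set.Icc 1 k, B i) ∪ {v₁})
        (⋃ i ∈ Set.Icc 1 k, A i))
      (h₂ : ChainDecomposable G ((⋃ i ∈ Set.Icc 1 k, D i) ∪ {v₂})
        (⋃ i ∈ Set.Icc 1 k, C i)) :
      ChainDecomposable G U W
  /-- the bipartite complement of `G` admits a left `k`-chain decomposition with `k ≥ 2`
  whose two components, augmented with the marker vertices, are chain-decomposable. -/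
  | cochainLeft (G : SimpleGraph V) (U W : Set V) (k : ℕ) (A B C D : ℕ → Set V) (v₁ v₂ : V)
      (hk : 2 ≤ k) (hdec : IsChainDecomp (bipComplOn G U W) U W k A B C D)
      (hv₁ : v₁ ∈ D 1) (hv₂ : v₂ ∈ B 1)
      (h₁ : ChainDecomposable (bipComplOn G U W) (⋃ i ∈ Set.Icc 1 k, A i)
        ((⋃ i ∈ Set.Icc 1 k, B i) ∪ {v₁}))
      (h₂ : ChainDecomposable (bipComplOn G U W) (⋃ i ∈ Set.Icc 1 k, C i)
        ((⋃ i ∈ Set.Icc 1 k, D i) ∪ {v₂})) :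
      ChainDecomposable G U W
  /-- the bipartite complement of `G` admits a right `k`-chain decomposition with `k ≥ 2`
  whose two components, augmented with the marker vertices, are chain-decomposable. -/
  | cochainRight (G : SimpleGraph V) (U W : Set V) (k : ℕ) (A B C D : ℕ → Set V) (v₁ v₂ : V)
      (hk : 2 ≤ k) (hdec : IsChainDecomp (bipComplOn G U W) W U k A B C D)
      (hv₁ : v₁ ∈ D 1) (hv₂ : v₂ ∈ B 1)
      (h₁ : ChainDecomposable (bipComplOn G U W) ((⋃ i ∈ Set.Icc 1 k, B i) ∪ {v₁})
        (⋃ i ∈ Set.Icc 1 k, A i))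
      (h₂ : ChainDecomposable (bipComplOn G U W) ((⋃ i ∈ Set.Icc 1 k, D i) ∪ {v₂})
        (⋃ i ∈ Set.Icc 1 k, C i)) :
      ChainDecomposable G U W


/-- edges restricted to `U ∪ W` go between `U` and `W`. -/
def CrossOnly (G : SimpleGraph V) (U W : Set V) : Prop :=
  ∀ ⦃x⦄, x ∈ U ∪ W → ∀ ⦃y⦄, y ∈ U ∪ W → G.Adj x y → (x ∈ U ∧ y ∈ W) ∨ (x ∈ W ∧ y ∈ U)

def unionParts (k : ℕ) (A : ℕ → Set V) : Set V := ⋃ i ∈ Set.Icc 1 k, A i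

lemma mem_unionParts {k : ℕ} {A : ℕ → Set V} {x : V} :
    x ∈ unionParts k A ↔ ∃ i, 1 ≤ i ∧ i ≤ k ∧ x ∈ A i := by
  unfold unionParts
  simp only [Set.mem_iUnion, Set.mem_Icc, exists_prop]
  constructor
  · rintro ⟨i, ⟨h1, h2⟩, h3⟩; exact ⟨i, h1, h2, h3⟩
  · rintro ⟨i, h1, h2, h3⟩; exact ⟨i, ⟨h1, h2⟩, h3⟩

lemma mem_unionParts_of {k i : ℕ} {A : ℕ → Set V} {x : V} (h1 : 1 ≤ i) (h2 : i ≤ k)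
    (hx : x ∈ A i) : x ∈ unionParts k A := mem_unionParts.2 ⟨i, h1, h2, hx⟩

variable {G P P' : SimpleGraph V} {U W X Y : Set V} {k : ℕ} {A B C D : ℕ → Set V}

lemma CrossOnly.swap (h : CrossOnly G U W) : CrossOnly G W U := fun x hx y hy had =>
  ((h (by rwa [Set.union_comm]) (by rwa [Set.union_comm]) had).symm)

lemma CrossOnly.mono {U' W' : Set V} (hcr : CrossOnly G U W) (hd : Disjoint U W)
    (hU : U' ⊆ U) (hW : W' ⊆ W) : CrossOnly G U' W' := by
  intro x hx y hy had
  have hx' : x ∈ U ∪ W := Set.union_subset_union hU hW hx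
  have hy' : y ∈ U ∪ W := Set.union_subset_union hU hW hy
  rcases hcr hx' hy' had with ⟨hxU, hyW⟩ | ⟨hxW, hyU⟩
  · left
    refine ⟨?_, ?_⟩
    · rcases hx with h | h
      · exact h
      · exact absurd hxU (Set.disjoint_right.1 hd (hW h))
    · rcases hy with h | h
      · exact absurd (hU h) (Set.disjoint_right.1 hd hyW)
      · exact h
  · right
    refine ⟨?_, ?_⟩
    · rcases hx with h | h
      · exact absurd (hU h) (Set.disjoint_right.1 hd hxW)
      · exact h
    · rcases hy with h | h
      · exact h
      · exact absurd hyU (Set.disjoint_right.1 hd (hW h))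

lemma CrossOnly.noUU (hcr : CrossOnly G U W) (hd : Disjoint U W) :
    ∀ x ∈ U, ∀ y ∈ U, ¬ G.Adj x y := by
  intro x hx y hy had
  rcases hcr (Or.inl hx) (Or.inl hy) had with ⟨_, hyW⟩ | ⟨hxW, _⟩
  · exact (Set.disjoint_left.1 hd hy) hyW
  · exact (Set.disjoint_left.1 hd hx) hxW

lemma CrossOnly.noWW (hcr : CrossOnly G U W) (hd : Disjoint U W) :
    ∀ x ∈ W, ∀ y ∈ W, ¬ G.Adj x y := hcr.swap.noUU hd.symm

lemma bipComplOn_cross : CrossOnly (bipComplOn G U W) U W := fun _ _ _ _ had => had.1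

lemma IsChainDecomp.swap (h : IsChainDecomp G U W k A B C D) :
    IsChainDecomp G U W k C D A B where
  one_le := h.one_le
  U_eq := by rw [Set.union_comm]; exact h.U_eq
  W_eq := by rw [Set.union_comm]; exact h.W_eq
  disjU := fun i hi j hj =>
    ⟨fun hne => ⟨((h.disjU i hi j hj).1 hne).2, ((h.disjU i hi j hj).1 hne).1⟩,
      ((h.disjU j hj i hi).2).symm⟩
  disjW := fun i hi j hj =>
    ⟨fun hne => ⟨((h.disjW i hi j hj).1 hne).2, ((h.disjW i hi j hj).1 hne).1⟩,
      ((h.disjW j hj i hi).2).symm⟩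
  nonempty_of_lt := fun i h1 h2 =>
    ⟨(h.nonempty_of_lt i h1 h2).2.2.1, (h.nonempty_of_lt i h1 h2).2.2.2,
      (h.nonempty_of_lt i h1 h2).1, (h.nonempty_of_lt i h1 h2).2.1⟩
  nonempty_last := by rcases h.nonempty_last with h' | h' | h' | h' <;> tauto
  B_nbr := h.D_nbr
  D_nbr := h.B_nbr
  A_nonnbr := h.C_nonnbr
  C_nonnbr := h.A_nonnbr
  AB := h.CD
  CD := h.AB
  AD := h.CB
  CB := h.AD

lemma IsChainDecomp.bUA_subset (h : IsChainDecomp G U W k A B C D) : unionParts k A ⊆ U := by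
  rw [← h.U_eq]; exact Set.subset_union_left

lemma IsChainDecomp.bUC_subset (h : IsChainDecomp G U W k A B C D) : unionParts k C ⊆ U := by
  rw [← h.U_eq]; exact Set.subset_union_right

lemma IsChainDecomp.bUB_subset (h : IsChainDecomp G U W k A B C D) : unionParts k B ⊆ W := by
  rw [← h.W_eq]; exact Set.subset_union_left

lemma IsChainDecomp.bUD_subset (h : IsChainDecomp G U W k A B C D) : unionParts k D ⊆ W := by
  rw [← h.W_eq]; exact Set.subset_union_right

lemma IsChainDecomp.v1_not_in_bUB (h : IsChainDecomp G U W k A B C D) {v₁ : V}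
    (hv₁ : v₁ ∈ D 1) : v₁ ∉ unionParts k B := by
  intro hv
  obtain ⟨j, hj1, hjk, hvj⟩ := mem_unionParts.1 hv
  exact Set.disjoint_right.1 (h.disjW j ⟨hj1, hjk⟩ 1 ⟨le_refl 1, h.one_le⟩).2 hv₁ hvj

lemma IsChainDecomp.disj_bU_AC (h : IsChainDecomp G U W k A B C D) :
    Disjoint (unionParts k A) (unionParts k C) := by
  rw [Set.disjoint_left]
  intro x hxA hxC
  obtain ⟨i, hi1, hik, hx⟩ := mem_unionParts.1 hxA
  obtain ⟨j, hj1, hjk, hx'⟩ := mem_unionParts.1 hxC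
  exact Set.disjoint_left.1 (h.disjU i ⟨hi1, hik⟩ j ⟨hj1, hjk⟩).2 hx hx'

lemma IsChainDecomp.disj_bU_BD (h : IsChainDecomp G U W k A B C D) :
    Disjoint (unionParts k B) (unionParts k D) := by
  rw [Set.disjoint_left]
  intro x hxB hxD
  obtain ⟨i, hi1, hik, hx⟩ := mem_unionParts.1 hxB
  obtain ⟨j, hj1, hjk, hx'⟩ := mem_unionParts.1 hxD
  exact Set.disjoint_left.1 (h.disjW i ⟨hi1, hik⟩ j ⟨hj1, hjk⟩).2 hx hx'


lemma IsChainDecomp.A1_eq (h : IsChainDecomp G U W k A B C D) {v₁ : V} (hv₁ : v₁ ∈ D 1) :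
    A 1 = {a ∈ unionParts k A | ¬ G.Adj a v₁} := by
  have h1k : (1 : ℕ) ∈ Set.Icc 1 k := ⟨le_refl 1, h.one_le⟩
  ext a
  simp only [Set.mem_setOf_eq]
  constructor
  · intro ha
    exact ⟨mem_unionParts_of (le_refl 1) h.one_le ha, (h.AD 1 h1k 1 h1k).2 (le_refl 1) ha hv₁⟩
  · rintro ⟨haU, hna⟩
    obtain ⟨i, hi1, hik, hai⟩ := mem_unionParts.1 haU
    rcases Nat.lt_or_ge 1 i with hlt | hle
    · exact absurd ((h.AD i ⟨hi1, hik⟩ 1 h1k).1 hlt hai hv₁) hna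
    · have : i = 1 := le_antisymm hle hi1
      rwa [this] at hai

lemma IsChainDecomp.B_eq (h : IsChainDecomp G U W k A B C D) {i : ℕ}
    (hi1 : 1 ≤ i) (hik : i ≤ k) :
    B i = {b ∈ unionParts k B | (∀ j, 1 ≤ j → j < i → b ∉ B j) ∧ ∃ a ∈ A i, G.Adj a b} := by
  have hiI : i ∈ Set.Icc 1 k := ⟨hi1, hik⟩
  ext b
  simp only [Set.mem_setOf_eq]
  constructor
  · intro hb
    refine ⟨mem_unionParts_of hi1 hik hb, fun j hj1 hji hbj => ?_, h.B_nbr i hiI b hb⟩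
    exact Set.disjoint_left.1
      ((h.disjW i hiI j ⟨hj1, le_trans (le_of_lt hji) hik⟩).1 (by omega)).1 hb hbj
  · rintro ⟨hbU, hprev, a, ha, hadj⟩
    obtain ⟨j, hj1, hjk, hbj⟩ := mem_unionParts.1 hbU
    rcases lt_trichotomy j i with hlt | heq | hgt
    · exact absurd hbj (hprev j hj1 hlt)
    · rwa [heq] at hbj
    · exact absurd hadj ((h.AB i hiI j ⟨hj1, hjk⟩).1 hgt ha hbj)

lemma IsChainDecomp.A_mid_eq (h : IsChainDecomp G U W k A B C D) {i : ℕ}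
    (h2 : 2 ≤ i) (hik : i < k) :
    A i = {a ∈ unionParts k A | (∀ j, 1 ≤ j → j < i → a ∉ A j) ∧ ∃ b ∈ B (i - 1), ¬ G.Adj a b} := by
  have hiI : i ∈ Set.Icc 1 k := ⟨by omega, le_of_lt hik⟩
  have hi1I : i - 1 ∈ Set.Icc 1 k := ⟨by omega, by omega⟩
  ext a
  simp only [Set.mem_setOf_eq]
  constructor
  · intro ha
    refine ⟨mem_unionParts_of (by omega) (le_of_lt hik) ha, fun j hj1 hji haj => ?_,
      h.A_nonnbr i h2 hik a ha⟩
    exact Set.disjoint_left.1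
      ((h.disjU i hiI j ⟨hj1, by omega⟩).1 (by omega)).1 ha haj
  · rintro ⟨haU, hprev, b, hb, hnadj⟩
    obtain ⟨j, hj1, hjk, haj⟩ := mem_unionParts.1 haU
    rcases lt_trichotomy j i with hlt | heq | hgt
    · exact absurd haj (hprev j hj1 hlt)
    · rwa [heq] at haj
    · exact absurd (((h.AB j ⟨hj1, hjk⟩ (i-1) hi1I).2 (by omega)) haj hb) hnadj

lemma IsChainDecomp.A_last_eq (h : IsChainDecomp G U W k A B C D) :
    A k = {a ∈ unionParts k A | ∀ j, 1 ≤ j → j < k → a ∉ A j} := by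
  have hkI : k ∈ Set.Icc 1 k := ⟨h.one_le, le_refl k⟩
  ext a
  simp only [Set.mem_setOf_eq]
  constructor
  · intro ha
    refine ⟨mem_unionParts_of h.one_le (le_refl k) ha, fun j hj1 hjk haj => ?_⟩
    exact Set.disjoint_left.1
      ((h.disjU k hkI j ⟨hj1, le_of_lt hjk⟩).1 (by omega)).1 ha haj
  · rintro ⟨haU, hprev⟩
    obtain ⟨j, hj1, hjk, haj⟩ := mem_unionParts.1 haU
    rcases eq_or_lt_of_le hjk with heq | hlt
    · rwa [heq] at haj
    · exact absurd haj (hprev j hj1 hlt)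


lemma idxAB_eq {X' Y' : Set V} {A' B' C' D' : ℕ → Set V}
    (h : IsChainDecomp P X Y k A B C D) (h' : IsChainDecomp P' X' Y' k A' B' C' D')
    {v₁ : V} (hv₁ : v₁ ∈ D 1) (hv₁' : v₁ ∈ D' 1)
    (hSA : unionParts k A = unionParts k A') (hSB : unionParts k B = unionParts k B')
    (ag : ∀ x ∈ unionParts k A ∪ (unionParts k B ∪ {v₁}), ∀ y ∈ unionParts k A ∪ (unionParts k B ∪ {v₁}),
        (P.Adj x y ↔ P'.Adj x y)) :
    ∀ i, 1 ≤ i → i ≤ k → A i = A' i ∧ B i = B' i := by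
  intro i
  induction i using Nat.strong_induction_on with
  | _ i IH =>
    intro hi1 hik
    have memA : ∀ x ∈ unionParts k A, x ∈ unionParts k A ∪ (unionParts k B ∪ {v₁}) := fun x hx => Or.inl hx
    have memB : ∀ x ∈ unionParts k B, x ∈ unionParts k A ∪ (unionParts k B ∪ {v₁}) := fun x hx => Or.inr (Or.inl hx)
    have memv : v₁ ∈ unionParts k A ∪ (unionParts k B ∪ {v₁}) := Or.inr (Or.inr rfl)
    have hA : A i = A' i := by
      rcases eq_or_lt_of_le hi1 with h1 | h2
      · rw [← h1, h.A1_eq hv₁, h'.A1_eq hv₁', ← hSA]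
        ext a
        simp only [Set.mem_setOf_eq]
        constructor
        · rintro ⟨ha, hna⟩
          exact ⟨ha, fun had => hna ((ag a (memA a ha) v₁ memv).2 had)⟩
        · rintro ⟨ha, hna⟩
          exact ⟨ha, fun had => hna ((ag a (memA a ha) v₁ memv).1 had)⟩
      · rcases Nat.lt_or_ge i k with hlt | hge
        · rw [h.A_mid_eq h2 hlt, h'.A_mid_eq h2 hlt, ← hSA]
          have hBprev : B (i-1) = B' (i-1) := (IH (i-1) (by omega) (by omega) (by omega)).2
          ext a
          simp only [Set.mem_setOf_eq]
          constructor
          · rintro ⟨ha, hprev, b, hb, hnadj⟩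
            have hbB : b ∈ unionParts k B := mem_unionParts_of (by omega) (by omega) hb
            refine ⟨ha, fun j hj1 hji haj => hprev j hj1 hji
              (((IH j hji hj1 (by omega)).1).symm ▸ haj), b, hBprev ▸ hb,
              fun had => hnadj ((ag a (memA a ha) b (memB b hbB)).2 had)⟩
          · rintro ⟨ha, hprev, b, hb, hnadj⟩
            have hb' : b ∈ B (i-1) := hBprev.symm ▸ hb
            have hbB : b ∈ unionParts k B := mem_unionParts_of (by omega) (by omega) hb'
            refine ⟨ha, fun j hj1 hji haj => hprev j hj1 hji
              (((IH j hji hj1 (by omega)).1) ▸ haj), b, hb',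
              fun had => hnadj ((ag a (memA a ha) b (memB b hbB)).1 had)⟩
        · obtain rfl : i = k := le_antisymm hik hge
          rw [h.A_last_eq, h'.A_last_eq, ← hSA]
          ext a
          simp only [Set.mem_setOf_eq]
          constructor
          · rintro ⟨ha, hprev⟩
            exact ⟨ha, fun j hj1 hji haj => hprev j hj1 hji
              (((IH j hji hj1 (by omega)).1).symm ▸ haj)⟩
          · rintro ⟨ha, hprev⟩
            exact ⟨ha, fun j hj1 hji haj => hprev j hj1 hji
              (((IH j hji hj1 (by omega)).1) ▸ haj)⟩
    have hB : B i = B' i := by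
      rw [h.B_eq hi1 hik, h'.B_eq hi1 hik, ← hSB]
      ext b
      simp only [Set.mem_setOf_eq]
      constructor
      · rintro ⟨hb, hprev, a, ha, hadj⟩
        have haA : a ∈ unionParts k A := mem_unionParts_of hi1 hik ha
        refine ⟨hb, fun j hj1 hji hbj => hprev j hj1 hji
          (((IH j hji hj1 (by omega)).2).symm ▸ hbj), a, hA ▸ ha,
          (ag a (memA a haA) b (memB b hb)).1 hadj⟩
      · rintro ⟨hb, hprev, a, ha, hadj⟩
        have ha' : a ∈ A i := hA.symm ▸ ha
        have haA : a ∈ unionParts k A := mem_unionParts_of hi1 hik ha'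
        refine ⟨hb, fun j hj1 hji hbj => hprev j hj1 hji
          (((IH j hji hj1 (by omega)).2) ▸ hbj), a, ha',
          (ag a (memA a haA) b (memB b hb)).2 hadj⟩
    exact ⟨hA, hB⟩



lemma chain_agree {A' B' C' D' : ℕ → Set V}
    (h : IsChainDecomp P X Y k A B C D) (h' : IsChainDecomp P' X Y k A' B' C' D')
    {v₁ v₂ : V} (hv₁ : v₁ ∈ D 1) (hv₁' : v₁ ∈ D' 1) (hv₂ : v₂ ∈ B 1) (hv₂' : v₂ ∈ B' 1)
    (hSA : unionParts k A = unionParts k A') (hSB : unionParts k B = unionParts k B')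
    (hSC : unionParts k C = unionParts k C') (hSD : unionParts k D = unionParts k D')
    (ag₁ : ∀ x ∈ unionParts k A ∪ (unionParts k B ∪ {v₁}),
        ∀ y ∈ unionParts k A ∪ (unionParts k B ∪ {v₁}), (P.Adj x y ↔ P'.Adj x y))
    (ag₂ : ∀ x ∈ unionParts k C ∪ (unionParts k D ∪ {v₂}),
        ∀ y ∈ unionParts k C ∪ (unionParts k D ∪ {v₂}), (P.Adj x y ↔ P'.Adj x y))
    (hcr : CrossOnly P X Y) (hcr' : CrossOnly P' X Y) (hd : Disjoint X Y) :
    ∀ x ∈ X ∪ Y, ∀ y ∈ X ∪ Y, (P.Adj x y ↔ P'.Adj x y) := by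
  have hAB := idxAB_eq h h' hv₁ hv₁' hSA hSB ag₁
  have hCD := idxAB_eq h.swap h'.swap hv₂ hv₂' hSC hSD ag₂
  have key : ∀ x ∈ X, ∀ y ∈ Y, (P.Adj x y ↔ P'.Adj x y) := by
    intro x hx y hy
    have hx' : x ∈ unionParts k A ∪ unionParts k C := by
      rw [← h.U_eq] at hx; exact hx
    have hy' : y ∈ unionParts k B ∪ unionParts k D := by
      rw [← h.W_eq] at hy; exact hy
    rcases hx' with hxA | hxC <;> rcases hy' with hyB | hyD
    · exact ag₁ x (Or.inl hxA) y (Or.inr (Or.inl hyB))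
    · -- A-D pair
      obtain ⟨i, hi1, hik, hxi⟩ := mem_unionParts.1 hxA
      obtain ⟨j, hj1, hjk, hyj⟩ := mem_unionParts.1 hyD
      have hxi' : x ∈ A' i := (hAB i hi1 hik).1 ▸ hxi
      have hyj' : y ∈ D' j := (hCD j hj1 hjk).2 ▸ hyj
      constructor
      · intro had
        rcases Nat.lt_or_ge j i with hlt | hge
        · exact (h'.AD i ⟨hi1, hik⟩ j ⟨hj1, hjk⟩).1 hlt hxi' hyj'
        · exact absurd had ((h.AD i ⟨hi1, hik⟩ j ⟨hj1, hjk⟩).2 hge hxi hyj)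
      · intro had
        rcases Nat.lt_or_ge j i with hlt | hge
        · exact (h.AD i ⟨hi1, hik⟩ j ⟨hj1, hjk⟩).1 hlt hxi hyj
        · exact absurd had ((h'.AD i ⟨hi1, hik⟩ j ⟨hj1, hjk⟩).2 hge hxi' hyj')
    · -- C-B pair
      obtain ⟨i, hi1, hik, hxi⟩ := mem_unionParts.1 hxC
      obtain ⟨j, hj1, hjk, hyj⟩ := mem_unionParts.1 hyB
      have hxi' : x ∈ C' i := (hCD i hi1 hik).1 ▸ hxi
      have hyj' : y ∈ B' j := (hAB j hj1 hjk).2 ▸ hyj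
      constructor
      · intro had
        rcases Nat.lt_or_ge j i with hlt | hge
        · exact (h'.CB i ⟨hi1, hik⟩ j ⟨hj1, hjk⟩).1 hlt hxi' hyj'
        · exact absurd had ((h.CB i ⟨hi1, hik⟩ j ⟨hj1, hjk⟩).2 hge hxi hyj)
      · intro had
        rcases Nat.lt_or_ge j i with hlt | hge
        · exact (h.CB i ⟨hi1, hik⟩ j ⟨hj1, hjk⟩).1 hlt hxi hyj
        · exact absurd had ((h'.CB i ⟨hi1, hik⟩ j ⟨hj1, hjk⟩).2 hge hxi' hyj')
    · exact ag₂ x (Or.inl hxC) y (Or.inr (Or.inl hyD))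
  intro x hx y hy
  rcases hx with hxX | hxY <;> rcases hy with hyX | hyY
  · exact iff_of_false (hcr.noUU hd x hxX y hyX) (hcr'.noUU hd x hxX y hyX)
  · exact key x hxX y hyY
  · exact ⟨fun had => ((key y hyX x hxY).1 had.symm).symm,
      fun had => ((key y hyX x hxY).2 had.symm).symm⟩
  · exact iff_of_false (hcr.noWW hd x hxY y hyY) (hcr'.noWW hd x hxY y hyY)

lemma flip_agree {G G' : SimpleGraph V} {U W : Set V}
    (hd : Disjoint U W) (hcr : CrossOnly G U W) (hcr' : CrossOnly G' U W)
    (hag : ∀ x ∈ U ∪ W, ∀ y ∈ U ∪ W,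
      ((bipComplOn G U W).Adj x y ↔ (bipComplOn G' U W).Adj x y)) :
    ∀ x ∈ U ∪ W, ∀ y ∈ U ∪ W, (G.Adj x y ↔ G'.Adj x y) := by
  have key : ∀ x ∈ U, ∀ y ∈ W, (G.Adj x y ↔ G'.Adj x y) := by
    intro x hx y hy
    have hne : x ≠ y := fun he => (Set.disjoint_left.1 hd hx) (he ▸ hy)
    have h1 := hag x (Or.inl hx) y (Or.inr hy)
    constructor
    · intro had
      by_contra hn'
      have h2 : (bipComplOn G' U W).Adj x y := ⟨Or.inl ⟨hx, hy⟩, hne, hn'⟩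
      exact (h1.2 h2).2.2 had
    · intro had
      by_contra hn'
      have h2 : (bipComplOn G U W).Adj x y := ⟨Or.inl ⟨hx, hy⟩, hne, hn'⟩
      exact (h1.1 h2).2.2 had
  intro x hx y hy
  rcases hx with hxU | hxW <;> rcases hy with hyU | hyW
  · exact iff_of_false (hcr.noUU hd x hxU y hyU) (hcr'.noUU hd x hxU y hyU)
  · exact key x hxU y hyW
  · exact ⟨fun had => ((key y hyU x hxW).1 had.symm).symm,
      fun had => ((key y hyU x hxW).2 had.symm).symm⟩
  · exact iff_of_false (hcr.noWW hd x hxW y hyW) (hcr'.noWW hd x hxW y hyW)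

lemma union_singleton_cancel {s t : Set V} {v : V} (hv : v ∉ s) (hv' : v ∉ t)
    (h : s ∪ {v} = t ∪ {v}) : s = t := by
  ext x
  constructor
  · intro hx
    have hx2 : x ∈ t ∪ {v} := by rw [← h]; exact Or.inl hx
    rcases hx2 with h1 | h2
    · exact h1
    · exact absurd ((Set.eq_of_mem_singleton h2) ▸ hx) hv
  · intro hx
    have hx2 : x ∈ s ∪ {v} := by rw [h]; exact Or.inl hx
    rcases hx2 with h1 | h2
    · exact h1
    · exact absurd ((Set.eq_of_mem_singleton h2) ▸ hx) hv'

lemma IsChainDecomp.k_le_card [Fintype V] (h : IsChainDecomp P X Y k A B C D) :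
    k ≤ Fintype.card V + 1 := by
  have hlt : ∀ i : Fin (k-1), (i:ℕ) + 1 < k := fun i => by have := i.isLt; omega
  let g : Fin (k-1) → V := fun i =>
    ((h.nonempty_of_lt ((i:ℕ)+1) (by omega) (hlt i)).2.1).some
  have hg : ∀ i : Fin (k-1), g i ∈ B ((i:ℕ)+1) := fun i =>
    ((h.nonempty_of_lt ((i:ℕ)+1) (by omega) (hlt i)).2.1).some_mem
  have hginj : Function.Injective g := by
    intro i j hij
    by_contra hne
    have hne' : (i:ℕ)+1 ≠ (j:ℕ)+1 := by
      simp only [ne_eq, add_left_inj]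
      exact fun hc => hne (Fin.ext hc)
    have h2 : g i ∈ B ((j:ℕ)+1) := by rw [hij]; exact hg j
    exact Set.disjoint_left.1
      ((h.disjW ((i:ℕ)+1) ⟨by omega, le_of_lt (hlt i)⟩
        ((j:ℕ)+1) ⟨by omega, le_of_lt (hlt j)⟩).1 hne').1 (hg i) h2
  have := Fintype.card_le_of_injective g hginj
  simp only [Fintype.card_fin] at this
  omega

lemma three_le_ncard [Finite V] {a b c : V} {s : Set V} (ha : a ∈ s) (hb : b ∈ s) (hc : c ∈ s)
    (hab : a ≠ b) (hac : a ≠ c) (hbc : b ≠ c) : 3 ≤ s.ncard := by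
  have h1 : ({a, b, c} : Set V) ⊆ s := by
    intro x hx
    rcases hx with h | h | h
    · exact h ▸ ha
    · exact h ▸ hb
    · exact (Set.eq_of_mem_singleton h) ▸ hc
  have h2 : ({a, b, c} : Set V).ncard = 3 := by
    rw [Set.ncard_insert_of_notMem (by simp [hab, hac]),
      Set.ncard_insert_of_notMem (by simp [hbc]), Set.ncard_singleton]
  calc (3:ℕ) = ({a, b, c} : Set V).ncard := h2.symm
    _ ≤ s.ncard := Set.ncard_le_ncard h1 (Set.toFinite s)

lemma chain_size_bounds [Finite V]
    (h : IsChainDecomp P X Y k A B C D) (hk : 2 ≤ k)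
    {v₁ v₂ : V} (hv₁ : v₁ ∈ D 1) (hv₂ : v₂ ∈ B 1) (hd : Disjoint X Y) :
    3 ≤ (unionParts k A ∪ (unionParts k B ∪ {v₁})).ncard ∧
    3 ≤ (unionParts k C ∪ (unionParts k D ∪ {v₂})).ncard ∧
    (unionParts k A ∪ (unionParts k B ∪ {v₁})).ncard +
      (unionParts k C ∪ (unionParts k D ∪ {v₂})).ncard ≤ (X ∪ Y).ncard + 2 := by
  obtain ⟨⟨a, haA⟩, ⟨b, hbB⟩, ⟨c, hcC⟩, ⟨d, hdD⟩⟩ := h.nonempty_of_lt 1 le_rfl (by omega)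
  have haU : a ∈ unionParts k A := mem_unionParts_of le_rfl h.one_le haA
  have hbU : b ∈ unionParts k B := mem_unionParts_of le_rfl h.one_le hbB
  have hcU : c ∈ unionParts k C := mem_unionParts_of le_rfl h.one_le hcC
  have hdU : d ∈ unionParts k D := mem_unionParts_of le_rfl h.one_le hdD
  have h11 : (1:ℕ) ∈ Set.Icc 1 k := ⟨le_rfl, h.one_le⟩
  have haX : a ∈ X := h.bUA_subset haU
  have hbY : b ∈ Y := h.bUB_subset hbU
  have hcX : c ∈ X := h.bUC_subset hcU
  have hdY : d ∈ Y := h.bUD_subset hdU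
  have hv₁Y : v₁ ∈ Y := h.bUD_subset (mem_unionParts_of le_rfl h.one_le hv₁)
  have hv₂Y : v₂ ∈ Y := h.bUB_subset (mem_unionParts_of le_rfl h.one_le hv₂)
  have hdisjBD : Disjoint (B 1) (D 1) := (h.disjW 1 h11 1 h11).2
  have s1 : 3 ≤ (unionParts k A ∪ (unionParts k B ∪ {v₁})).ncard := by
    refine three_le_ncard (Or.inl haU) (Or.inr (Or.inl hbU)) (Or.inr (Or.inr rfl))
      ?_ ?_ ?_
    · exact fun he => (Set.disjoint_left.1 hd haX) (he ▸ hbY)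
    · exact fun he => (Set.disjoint_left.1 hd haX) (he ▸ hv₁Y)
    · exact fun he => (Set.disjoint_left.1 hdisjBD hbB) (he ▸ hv₁)
  have s2 : 3 ≤ (unionParts k C ∪ (unionParts k D ∪ {v₂})).ncard := by
    refine three_le_ncard (Or.inl hcU) (Or.inr (Or.inl hdU)) (Or.inr (Or.inr rfl))
      ?_ ?_ ?_
    · exact fun he => (Set.disjoint_left.1 hd hcX) (he ▸ hdY)
    · exact fun he => (Set.disjoint_left.1 hd hcX) (he ▸ hv₂Y)
    · exact fun he => (Set.disjoint_right.1 hdisjBD hdD) (he ▸ hv₂)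
  refine ⟨s1, s2, ?_⟩
  have e1 : (unionParts k A ∪ (unionParts k B ∪ {v₁})).ncard ≤
      (unionParts k A).ncard + ((unionParts k B).ncard + 1) := by
    refine le_trans (Set.ncard_union_le _ _) (add_le_add_right ?_ _)
    refine le_trans (Set.ncard_union_le _ _) ?_
    rw [Set.ncard_singleton]
  have e2 : (unionParts k C ∪ (unionParts k D ∪ {v₂})).ncard ≤
      (unionParts k C).ncard + ((unionParts k D).ncard + 1) := by
    refine le_trans (Set.ncard_union_le _ _) (add_le_add_right ?_ _)
    refine le_trans (Set.ncard_union_le _ _) ?_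
    rw [Set.ncard_singleton]
  have d1 : Disjoint (unionParts k A) (unionParts k C) := h.disj_bU_AC
  have d2 : Disjoint (unionParts k B) (unionParts k D) := h.disj_bU_BD
  have d3 : Disjoint (unionParts k A ∪ unionParts k C)
      (unionParts k B ∪ unionParts k D) :=
    hd.mono (Set.union_subset h.bUA_subset h.bUC_subset)
      (Set.union_subset h.bUB_subset h.bUD_subset)
  have e3 : (unionParts k A ∪ unionParts k C).ncard =
      (unionParts k A).ncard + (unionParts k C).ncard :=
    Set.ncard_union_eq d1 (Set.toFinite _) (Set.toFinite _)
  have e4 : (unionParts k B ∪ unionParts k D).ncard =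
      (unionParts k B).ncard + (unionParts k D).ncard :=
    Set.ncard_union_eq d2 (Set.toFinite _) (Set.toFinite _)
  have e5 : ((unionParts k A ∪ unionParts k C) ∪
      (unionParts k B ∪ unionParts k D)).ncard =
      (unionParts k A ∪ unionParts k C).ncard +
      (unionParts k B ∪ unionParts k D).ncard :=
    Set.ncard_union_eq d3 (Set.toFinite _) (Set.toFinite _)
  have e6 : ((unionParts k A ∪ unionParts k C) ∪
      (unionParts k B ∪ unionParts k D)).ncard ≤ (X ∪ Y).ncard := by
    refine Set.ncard_le_ncard ?_ (Set.toFinite _)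
    exact Set.union_subset_union (le_of_eq h.U_eq) (le_of_eq h.W_eq)
  omega

def Bnd (m : ℕ) : ℕ := if m ≤ 2 then 2*m - 1 else 20*m - 47

lemma Bnd_one : Bnd 1 = 1 := by simp [Bnd]

lemma Bnd_union {a b m : ℕ} (ha : 1 ≤ a) (hb : 1 ≤ b) (hm : a + b ≤ m) :
    Bnd a + Bnd b + 1 ≤ Bnd m := by unfold Bnd; split_ifs <;> omega

lemma Bnd_chain {s₁ s₂ m : ℕ} (h1 : 3 ≤ s₁) (h2 : 3 ≤ s₂) (hm : s₁ + s₂ ≤ m + 2) :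
    Bnd s₁ + Bnd s₂ + 1 ≤ Bnd m := by unfold Bnd; split_ifs <;> omega

lemma Bnd_le (m : ℕ) : Bnd m ≤ 20*m := by unfold Bnd; split_ifs <;> omega

lemma Bnd_mono : Monotone Bnd := by
  intro a b hab
  unfold Bnd
  split_ifs <;> omega


abbrev Lab (n : ℕ) : Type :=
  (Fin n × Bool) ⊕ ((Bool × Bool × Bool) × (Fin n × Fin n) × Fin (n + 2))

inductive Enc {n : ℕ} : List (Lab n) → SimpleGraph (Fin n) → Set (Fin n) → Set (Fin n) → Prop
  | leaf (G : SimpleGraph (Fin n)) (U W : Set (Fin n)) (v : Fin n) (b : Bool)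
      (ht : b = true → U = {v} ∧ W = ∅) (hf : b = false → U = ∅ ∧ W = {v}) :
      Enc [Sum.inl (v, b)] G U W
  | union (l₁ l₂ : List (Lab n)) (G H : SimpleGraph (Fin n)) (U₁ W₁ U₂ W₂ : Set (Fin n))
      (co : Bool) (x₀ : Fin n)
      (hH : H = cond co (bipComplOn G (U₁ ∪ U₂) (W₁ ∪ W₂)) G)
      (hd : Disjoint (U₁ ∪ W₁) (U₂ ∪ W₂))
      (hanti : AnticompleteTo H (U₁ ∪ W₁) (U₂ ∪ W₂))
      (hdisj : Disjoint (U₁ ∪ U₂) (W₁ ∪ W₂))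
      (hcross : CrossOnly G (U₁ ∪ U₂) (W₁ ∪ W₂))
      (h₁ : Enc l₁ H U₁ W₁) (h₂ : Enc l₂ H U₂ W₂) :
      Enc (Sum.inr ((false, co, false), (x₀, x₀), 0) :: (l₁ ++ l₂)) G (U₁ ∪ U₂) (W₁ ∪ W₂)
  | chain (l₁ l₂ : List (Lab n)) (G H : SimpleGraph (Fin n)) (U W : Set (Fin n))
      (k : ℕ) (A B C D : ℕ → Set (Fin n)) (v₁ v₂ : Fin n) (kf : Fin (n + 2)) (sw co : Bool)
      (hH : H = cond co (bipComplOn G U W) G)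
      (hk : 2 ≤ k) (hkf : (kf : ℕ) = k)
      (hdec : IsChainDecomp H (cond sw W U) (cond sw U W) k A B C D)
      (hv₁ : v₁ ∈ D 1) (hv₂ : v₂ ∈ B 1)
      (hdisj : Disjoint U W) (hcross : CrossOnly G U W)
      (h₁ : Enc l₁ H (cond sw (unionParts k B ∪ {v₁}) (unionParts k A))
          (cond sw (unionParts k A) (unionParts k B ∪ {v₁})))
      (h₂ : Enc l₂ H (cond sw (unionParts k D ∪ {v₂}) (unionParts k C))
          (cond sw (unionParts k C) (unionParts k D ∪ {v₂}))) :
      Enc (Sum.inr ((true, sw, co), (v₁, v₂), kf) :: (l₁ ++ l₂)) G U W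

lemma exists_code {n : ℕ} {G : SimpleGraph (Fin n)} {U W : Set (Fin n)}
    (h : ChainDecomposable G U W) :
    Disjoint U W → CrossOnly G U W →
      ∃ L : List (Lab n), Enc L G U W ∧ L.length ≤ Bnd ((U ∪ W).ncard) := by
  induction h with
  | single G U W v hUW =>
    intro hdisj _
    have hsub : U ⊆ {v} := hUW ▸ Set.subset_union_left
    have hsub' : W ⊆ {v} := hUW ▸ Set.subset_union_right
    have hncard : (U ∪ W).ncard = 1 := by rw [hUW, Set.ncard_singleton]
    by_cases hvU : v ∈ U
    · have hU : U = {v} := subset_antisymm hsub (Set.singleton_subset_iff.2 hvU)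
      have hW : W = ∅ := by
        ext w
        simp only [Set.mem_empty_iff_false, iff_false]
        intro hw
        have : w = v := hsub' hw
        exact Set.disjoint_left.1 hdisj hvU (this ▸ hw)
      refine ⟨[Sum.inl (v, true)], Enc.leaf G U W v true (fun _ => ⟨hU, hW⟩)
        (fun hc => by simp at hc), ?_⟩
      simp [hncard, Bnd_one]
    · have hvW : v ∈ W := by
        have hv : v ∈ U ∪ W := by rw [hUW]; rfl
        rcases hv with h' | h'
        · exact absurd h' hvU
        · exact h'
      have hW : W = {v} := subset_antisymm hsub' (Set.singleton_subset_iff.2 hvW)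
      have hU : U = ∅ := by
        ext u
        simp only [Set.mem_empty_iff_false, iff_false]
        intro hu
        have : u = v := hsub hu
        exact hvU (this ▸ hu)
      refine ⟨[Sum.inl (v, false)], Enc.leaf G U W v false (fun hc => by simp at hc)
        (fun _ => ⟨hU, hW⟩), ?_⟩
      simp [hncard, Bnd_one]
  | union G U₁ W₁ U₂ W₂ hd hne₁ hne₂ hanti h₁ h₂ ih₁ ih₂ =>
    intro hdisj hcross
    have hd₁ : Disjoint U₁ W₁ :=
      hdisj.mono Set.subset_union_left Set.subset_union_left
    have hd₂ : Disjoint U₂ W₂ :=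
      hdisj.mono Set.subset_union_right Set.subset_union_right
    have hc₁ : CrossOnly G U₁ W₁ :=
      hcross.mono hdisj Set.subset_union_left Set.subset_union_left
    have hc₂ : CrossOnly G U₂ W₂ :=
      hcross.mono hdisj Set.subset_union_right Set.subset_union_right
    obtain ⟨L₁, e₁, len₁⟩ := ih₁ hd₁ hc₁
    obtain ⟨L₂, e₂, len₂⟩ := ih₂ hd₂ hc₂
    refine ⟨_, Enc.union L₁ L₂ G G U₁ W₁ U₂ W₂ false hne₁.some rfl hd hanti hdisj hcross e₁ e₂, ?_⟩
    have n₁ : 1 ≤ (U₁ ∪ W₁).ncard := (Set.ncard_pos (Set.toFinite _)).2 hne₁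
    have n₂ : 1 ≤ (U₂ ∪ W₂).ncard := (Set.ncard_pos (Set.toFinite _)).2 hne₂
    have hsum : (U₁ ∪ W₁).ncard + (U₂ ∪ W₂).ncard ≤ ((U₁ ∪ U₂) ∪ (W₁ ∪ W₂)).ncard := by
      rw [← Set.union_union_union_comm, Set.ncard_union_eq hd (Set.toFinite _) (Set.toFinite _)]
    have := Bnd_union n₁ n₂ hsum
    simp only [List.length_cons, List.length_append]
    omega
  | counion G U₁ W₁ U₂ W₂ hd hne₁ hne₂ hanti h₁ h₂ ih₁ ih₂ =>
    intro hdisj hcross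
    have hcH : CrossOnly (bipComplOn G (U₁ ∪ U₂) (W₁ ∪ W₂)) (U₁ ∪ U₂) (W₁ ∪ W₂) :=
      bipComplOn_cross
    have hd₁ : Disjoint U₁ W₁ :=
      hdisj.mono Set.subset_union_left Set.subset_union_left
    have hd₂ : Disjoint U₂ W₂ :=
      hdisj.mono Set.subset_union_right Set.subset_union_right
    have hc₁ : CrossOnly (bipComplOn G (U₁ ∪ U₂) (W₁ ∪ W₂)) U₁ W₁ :=
      hcH.mono hdisj Set.subset_union_left Set.subset_union_left
    have hc₂ : CrossOnly (bipComplOn G (U₁ ∪ U₂) (W₁ ∪ W₂)) U₂ W₂ :=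
      hcH.mono hdisj Set.subset_union_right Set.subset_union_right
    obtain ⟨L₁, e₁, len₁⟩ := ih₁ hd₁ hc₁
    obtain ⟨L₂, e₂, len₂⟩ := ih₂ hd₂ hc₂
    refine ⟨_, Enc.union L₁ L₂ G (bipComplOn G (U₁ ∪ U₂) (W₁ ∪ W₂)) U₁ W₁ U₂ W₂ true hne₁.some
      rfl hd hanti hdisj hcross e₁ e₂, ?_⟩
    have n₁ : 1 ≤ (U₁ ∪ W₁).ncard := (Set.ncard_pos (Set.toFinite _)).2 hne₁
    have n₂ : 1 ≤ (U₂ ∪ W₂).ncard := (Set.ncard_pos (Set.toFinite _)).2 hne₂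
    have hsum : (U₁ ∪ W₁).ncard + (U₂ ∪ W₂).ncard ≤ ((U₁ ∪ U₂) ∪ (W₁ ∪ W₂)).ncard := by
      rw [← Set.union_union_union_comm, Set.ncard_union_eq hd (Set.toFinite _) (Set.toFinite _)]
    have := Bnd_union n₁ n₂ hsum
    simp only [List.length_cons, List.length_append]
    omega
  | chainLeft G U W k A B C D v₁ v₂ hk hdec hv₁ hv₂ h₁ h₂ ih₁ ih₂ =>
    intro hdisj hcross
    have hsubA : unionParts k A ⊆ U := hdec.bUA_subset
    have hsubC : unionParts k C ⊆ U := hdec.bUC_subset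
    have hsubB1 : unionParts k B ∪ {v₁} ⊆ W :=
      Set.union_subset hdec.bUB_subset
        (Set.singleton_subset_iff.2 (hdec.bUD_subset (mem_unionParts_of le_rfl hdec.one_le hv₁)))
    have hsubD2 : unionParts k D ∪ {v₂} ⊆ W :=
      Set.union_subset hdec.bUD_subset
        (Set.singleton_subset_iff.2 (hdec.bUB_subset (mem_unionParts_of le_rfl hdec.one_le hv₂)))
    obtain ⟨L₁, e₁, len₁⟩ := ih₁ (hdisj.mono hsubA hsubB1) (hcross.mono hdisj hsubA hsubB1)
    obtain ⟨L₂, e₂, len₂⟩ := ih₂ (hdisj.mono hsubC hsubD2) (hcross.mono hdisj hsubC hsubD2)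
    have hkn : k ≤ n + 1 := by
      have := hdec.k_le_card
      rwa [Fintype.card_fin] at this
    refine ⟨_, Enc.chain L₁ L₂ G G U W k A B C D v₁ v₂ ⟨k, by omega⟩ false false
      rfl hk rfl hdec hv₁ hv₂ hdisj hcross e₁ e₂, ?_⟩
    obtain ⟨s1, s2, hsum⟩ := chain_size_bounds hdec hk hv₁ hv₂ hdisj
    unfold unionParts at s1 s2 hsum
    have := Bnd_chain s1 s2 hsum
    simp only [List.length_cons, List.length_append]
    omega
  | chainRight G U W k A B C D v₁ v₂ hk hdec hv₁ hv₂ h₁ h₂ ih₁ ih₂ =>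
    intro hdisj hcross
    have hsubA : unionParts k A ⊆ W := hdec.bUA_subset
    have hsubC : unionParts k C ⊆ W := hdec.bUC_subset
    have hsubB1 : unionParts k B ∪ {v₁} ⊆ U :=
      Set.union_subset hdec.bUB_subset
        (Set.singleton_subset_iff.2 (hdec.bUD_subset (mem_unionParts_of le_rfl hdec.one_le hv₁)))
    have hsubD2 : unionParts k D ∪ {v₂} ⊆ U :=
      Set.union_subset hdec.bUD_subset
        (Set.singleton_subset_iff.2 (hdec.bUB_subset (mem_unionParts_of le_rfl hdec.one_le hv₂)))
    obtain ⟨L₁, e₁, len₁⟩ := ih₁ (hdisj.mono hsubB1 hsubA) (hcross.mono hdisj hsubB1 hsubA)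
    obtain ⟨L₂, e₂, len₂⟩ := ih₂ (hdisj.mono hsubD2 hsubC) (hcross.mono hdisj hsubD2 hsubC)
    have hkn : k ≤ n + 1 := by
      have := hdec.k_le_card
      rwa [Fintype.card_fin] at this
    refine ⟨_, Enc.chain L₁ L₂ G G U W k A B C D v₁ v₂ ⟨k, by omega⟩ true false
      rfl hk rfl hdec hv₁ hv₂ hdisj hcross e₁ e₂, ?_⟩
    obtain ⟨s1, s2, hsum⟩ := chain_size_bounds hdec hk hv₁ hv₂ hdisj.symm
    rw [Set.union_comm (unionParts k A)] at s1 hsum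
    rw [Set.union_comm (unionParts k C)] at s2 hsum
    rw [Set.union_comm W U] at hsum
    unfold unionParts at s1 s2 hsum
    have := Bnd_chain s1 s2 hsum
    simp only [List.length_cons, List.length_append]
    omega
  | cochainLeft G U W k A B C D v₁ v₂ hk hdec hv₁ hv₂ h₁ h₂ ih₁ ih₂ =>
    intro hdisj hcross
    have hcH : CrossOnly (bipComplOn G U W) U W := bipComplOn_cross
    have hsubA : unionParts k A ⊆ U := hdec.bUA_subset
    have hsubC : unionParts k C ⊆ U := hdec.bUC_subset
    have hsubB1 : unionParts k B ∪ {v₁} ⊆ W :=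
      Set.union_subset hdec.bUB_subset
        (Set.singleton_subset_iff.2 (hdec.bUD_subset (mem_unionParts_of le_rfl hdec.one_le hv₁)))
    have hsubD2 : unionParts k D ∪ {v₂} ⊆ W :=
      Set.union_subset hdec.bUD_subset
        (Set.singleton_subset_iff.2 (hdec.bUB_subset (mem_unionParts_of le_rfl hdec.one_le hv₂)))
    obtain ⟨L₁, e₁, len₁⟩ := ih₁ (hdisj.mono hsubA hsubB1) (hcH.mono hdisj hsubA hsubB1)
    obtain ⟨L₂, e₂, len₂⟩ := ih₂ (hdisj.mono hsubC hsubD2) (hcH.mono hdisj hsubC hsubD2)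
    have hkn : k ≤ n + 1 := by
      have := hdec.k_le_card
      rwa [Fintype.card_fin] at this
    refine ⟨_, Enc.chain L₁ L₂ G (bipComplOn G U W) U W k A B C D v₁ v₂ ⟨k, by omega⟩
      false true rfl hk rfl hdec hv₁ hv₂ hdisj hcross e₁ e₂, ?_⟩
    obtain ⟨s1, s2, hsum⟩ := chain_size_bounds hdec hk hv₁ hv₂ hdisj
    unfold unionParts at s1 s2 hsum
    have := Bnd_chain s1 s2 hsum
    simp only [List.length_cons, List.length_append]
    omega
  | cochainRight G U W k A B C D v₁ v₂ hk hdec hv₁ hv₂ h₁ h₂ ih₁ ih₂ =>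
    intro hdisj hcross
    have hcH : CrossOnly (bipComplOn G U W) U W := bipComplOn_cross
    have hsubA : unionParts k A ⊆ W := hdec.bUA_subset
    have hsubC : unionParts k C ⊆ W := hdec.bUC_subset
    have hsubB1 : unionParts k B ∪ {v₁} ⊆ U :=
      Set.union_subset hdec.bUB_subset
        (Set.singleton_subset_iff.2 (hdec.bUD_subset (mem_unionParts_of le_rfl hdec.one_le hv₁)))
    have hsubD2 : unionParts k D ∪ {v₂} ⊆ U :=
      Set.union_subset hdec.bUD_subset
        (Set.singleton_subset_iff.2 (hdec.bUB_subset (mem_unionParts_of le_rfl hdec.one_le hv₂)))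
    obtain ⟨L₁, e₁, len₁⟩ := ih₁ (hdisj.mono hsubB1 hsubA) (hcH.mono hdisj hsubB1 hsubA)
    obtain ⟨L₂, e₂, len₂⟩ := ih₂ (hdisj.mono hsubD2 hsubC) (hcH.mono hdisj hsubD2 hsubC)
    have hkn : k ≤ n + 1 := by
      have := hdec.k_le_card
      rwa [Fintype.card_fin] at this
    refine ⟨_, Enc.chain L₁ L₂ G (bipComplOn G U W) U W k A B C D v₁ v₂ ⟨k, by omega⟩
      true true rfl hk rfl hdec hv₁ hv₂ hdisj hcross e₁ e₂, ?_⟩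
    obtain ⟨s1, s2, hsum⟩ := chain_size_bounds hdec hk hv₁ hv₂ hdisj.symm
    rw [Set.union_comm (unionParts k A)] at s1 hsum
    rw [Set.union_comm (unionParts k C)] at s2 hsum
    rw [Set.union_comm W U] at hsum
    unfold unionParts at s1 s2 hsum
    have := Bnd_chain s1 s2 hsum
    simp only [List.length_cons, List.length_append]
    omega

lemma enc_det {n : ℕ} {L₁ : List (Lab n)} {G : SimpleGraph (Fin n)} {U W : Set (Fin n)}
    (h : Enc L₁ G U W) :
    ∀ {L₂ : List (Lab n)} {G' : SimpleGraph (Fin n)} {U' W' : Set (Fin n)},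
      Enc L₂ G' U' W' → ∀ {T₁ T₂ : List (Lab n)},
      L₁ ++ T₁ = L₂ ++ T₂ →
      L₁ = L₂ ∧ T₁ = T₂ ∧ U = U' ∧ W = W' ∧
        (∀ x ∈ U ∪ W, ∀ y ∈ U ∪ W, (G.Adj x y ↔ G'.Adj x y)) := by
  induction h with
  | leaf G U W v b ht hf =>
    intro L₂ G' U' W' h' T₁ T₂ heq
    cases h' with
    | leaf G' U' W' v' b' ht' hf' =>
      simp only [List.cons_append, List.nil_append, List.cons.injEq, Sum.inl.injEq,
        Prod.mk.injEq] at heq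
      obtain ⟨⟨rfl, rfl⟩, rfl⟩ := heq
      have hag : ∀ (hU : U = U') (hW : W = W'),
          U ∪ W = {v} → (U = U' ∧ W = W' ∧
          (∀ x ∈ U ∪ W, ∀ y ∈ U ∪ W, (G.Adj x y ↔ G'.Adj x y))) := by
        intro hU hW hUW
        refine ⟨hU, hW, ?_⟩
        intro x hx y hy
        rw [hUW, Set.mem_singleton_iff] at hx hy
        subst hx hy
        exact iff_of_false (G.irrefl) (G'.irrefl)
      cases b
      · obtain ⟨hU, hW⟩ := hf rfl
        obtain ⟨hU', hW'⟩ := hf' rfl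
        obtain ⟨a1, a2, a3⟩ := hag (by rw [hU, hU']) (by rw [hW, hW'])
          (by rw [hU, hW, Set.empty_union])
        exact ⟨rfl, rfl, a1, a2, a3⟩
      · obtain ⟨hU, hW⟩ := ht rfl
        obtain ⟨hU', hW'⟩ := ht' rfl
        obtain ⟨a1, a2, a3⟩ := hag (by rw [hU, hU']) (by rw [hW, hW'])
          (by rw [hU, hW, Set.union_empty])
        exact ⟨rfl, rfl, a1, a2, a3⟩
    | union m₁ m₂ G' H' U₁' W₁' U₂' W₂' co' x₀' hH' hd' hanti' hdisj' hcross' g₁ g₂ =>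
      simp at heq
    | chain m₁ m₂ G' H' U'' W'' k' A' B' C' D' v₁' v₂' kf' sw' co' hH' hk' hkf' hdec'
        hv₁' hv₂' hdisj' hcross' g₁ g₂ =>
      simp at heq
  | union l₁ l₂ G H U₁ W₁ U₂ W₂ co x₀ hH hd hanti hdisj hcross h₁ h₂ ih₁ ih₂ =>
    intro L₂ G' U' W' h' T₁ T₂ heq
    cases h' with
    | leaf G' U' W' v' b' ht' hf' => simp at heq
    | chain m₁ m₂ G' H' U'' W'' k' A' B' C' D' v₁' v₂' kf' sw' co' hH' hk' hkf' hdec'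
        hv₁' hv₂' hdisj' hcross' g₁ g₂ =>
      simp only [List.cons_append, List.cons.injEq, Sum.inr.injEq, Prod.mk.injEq] at heq
      exact absurd heq.1.1.1 (by simp)
    | union m₁ m₂ G' H' U₁' W₁' U₂' W₂' co' x₀' hH' hd' hanti' hdisj' hcross' g₁ g₂ =>
      simp only [List.cons_append, List.cons.injEq, Sum.inr.injEq, Prod.mk.injEq] at heq
      obtain ⟨⟨⟨-, hco, -⟩, ⟨hx0, -⟩, -⟩, htail⟩ := heq
      subst hco hx0
      rw [List.append_assoc, List.append_assoc] at htail
      obtain ⟨hl₁, htail₂, hU₁, hW₁, ag₁⟩ := ih₁ g₁ htail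
      obtain ⟨hl₂, hT, hU₂, hW₂, ag₂⟩ := ih₂ g₂ htail₂
      subst hl₁ hl₂ hT hU₁ hW₁ hU₂ hW₂
      have hset : (U₁ ∪ U₂) ∪ (W₁ ∪ W₂) = (U₁ ∪ W₁) ∪ (U₂ ∪ W₂) :=
        Set.union_union_union_comm U₁ U₂ W₁ W₂
      have agH : ∀ x ∈ (U₁ ∪ U₂) ∪ (W₁ ∪ W₂), ∀ y ∈ (U₁ ∪ U₂) ∪ (W₁ ∪ W₂),
          (H.Adj x y ↔ H'.Adj x y) := by
        intro x hx y hy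
        rw [hset] at hx hy
        rcases hx with hx | hx <;> rcases hy with hy | hy
        · exact ag₁ x hx y hy
        · exact iff_of_false (hanti hx hy) (hanti' hx hy)
        · exact iff_of_false (fun had => hanti hy hx had.symm)
            (fun had => hanti' hy hx had.symm)
        · exact ag₂ x hx y hy
      cases co
      · simp only [Bool.cond_false] at hH hH'
        subst hH hH'
        exact ⟨rfl, rfl, rfl, rfl, agH⟩
      · simp only [Bool.cond_true] at hH hH'
        subst hH hH'
        exact ⟨rfl, rfl, rfl, rfl, flip_agree hdisj hcross hcross' agH⟩
  | chain l₁ l₂ G H U W k A B C D v₁ v₂ kf sw co hH hk hkf hdec hv₁ hv₂ hdisj hcross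
      h₁ h₂ ih₁ ih₂ =>
    intro L₂ G' U' W' h' T₁ T₂ heq
    cases h' with
    | leaf G' U' W' v' b' ht' hf' => simp at heq
    | union m₁ m₂ G' H' U₁' W₁' U₂' W₂' co' x₀' hH' hd' hanti' hdisj' hcross' g₁ g₂ =>
      simp only [List.cons_append, List.cons.injEq, Sum.inr.injEq, Prod.mk.injEq] at heq
      exact absurd heq.1.1.1 (by simp)
    | chain m₁ m₂ G' H' U'' W'' k' A' B' C' D' v₁' v₂' kf' sw' co' hH' hk' hkf' hdec'
        hv₁' hv₂' hdisj' hcross' g₁ g₂ =>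
      simp only [List.cons_append, List.cons.injEq, Sum.inr.injEq, Prod.mk.injEq] at heq
      obtain ⟨⟨⟨-, hsw, hco⟩, ⟨hv1, hv2⟩, hkfe⟩, htail⟩ := heq
      subst hsw hco hv1 hv2
      subst hkfe
      have hkk : k = k' := by rw [← hkf]; exact hkf'
      subst hkk
      rw [List.append_assoc, List.append_assoc] at htail
      obtain ⟨hl₁, htail₂, hU₁, hW₁, ag₁⟩ := ih₁ g₁ htail
      obtain ⟨hl₂, hT, hU₂, hW₂, ag₂⟩ := ih₂ g₂ htail₂
      subst hl₁ hl₂ hT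
      cases sw
      · -- left decomposition
        simp only [Bool.cond_false] at hdec hdec' hU₁ hW₁ hU₂ hW₂ ag₁ ag₂
        have hSA : unionParts k A = unionParts k A' := hU₁
        have hSB : unionParts k B = unionParts k B' :=
          union_singleton_cancel (hdec.v1_not_in_bUB hv₁) (hdec'.v1_not_in_bUB hv₁') hW₁
        have hSC : unionParts k C = unionParts k C' := hU₂
        have hSD : unionParts k D = unionParts k D' :=
          union_singleton_cancel ((hdec.swap).v1_not_in_bUB hv₂)
            ((hdec'.swap).v1_not_in_bUB hv₂') hW₂
        have hXeq : U = U' := by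
          rw [← hdec.U_eq, ← hdec'.U_eq]
          exact congrArg₂ (· ∪ ·) hSA hSC
        have hYeq : W = W' := by
          rw [← hdec.W_eq, ← hdec'.W_eq]
          exact congrArg₂ (· ∪ ·) hSB hSD
        subst hXeq hYeq
        have hcrH : CrossOnly H U W := by
          cases co
          · simp only [Bool.cond_false] at hH; subst hH; exact hcross
          · simp only [Bool.cond_true] at hH; subst hH; exact bipComplOn_cross
        have hcrH' : CrossOnly H' U W := by
          cases co
          · simp only [Bool.cond_false] at hH'; subst hH'; exact hcross'
          · simp only [Bool.cond_true] at hH'; subst hH'; exact bipComplOn_cross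
        have agH : ∀ x ∈ U ∪ W, ∀ y ∈ U ∪ W, (H.Adj x y ↔ H'.Adj x y) :=
          chain_agree hdec hdec' hv₁ hv₁' hv₂ hv₂' hSA hSB hSC hSD ag₁ ag₂
            hcrH hcrH' hdisj
        cases co
        · simp only [Bool.cond_false] at hH hH'
          subst hH hH'
          exact ⟨rfl, rfl, rfl, rfl, agH⟩
        · simp only [Bool.cond_true] at hH hH'
          subst hH hH'
          exact ⟨rfl, rfl, rfl, rfl, flip_agree hdisj hcross hcross' agH⟩
      · -- right decomposition
        simp only [Bool.cond_true] at hdec hdec' hU₁ hW₁ hU₂ hW₂ ag₁ ag₂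
        have hSA : unionParts k A = unionParts k A' := hW₁
        have hSB : unionParts k B = unionParts k B' :=
          union_singleton_cancel (hdec.v1_not_in_bUB hv₁) (hdec'.v1_not_in_bUB hv₁') hU₁
        have hSC : unionParts k C = unionParts k C' := hW₂
        have hSD : unionParts k D = unionParts k D' :=
          union_singleton_cancel ((hdec.swap).v1_not_in_bUB hv₂)
            ((hdec'.swap).v1_not_in_bUB hv₂') hU₂
        have hXeq : W = W' := by
          rw [← hdec.U_eq, ← hdec'.U_eq]
          exact congrArg₂ (· ∪ ·) hSA hSC
        have hYeq : U = U' := by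
          rw [← hdec.W_eq, ← hdec'.W_eq]
          exact congrArg₂ (· ∪ ·) hSB hSD
        subst hXeq hYeq
        have hcrH : CrossOnly H W U := by
          cases co
          · simp only [Bool.cond_false] at hH; subst hH; exact hcross.swap
          · simp only [Bool.cond_true] at hH; subst hH; exact bipComplOn_cross.swap
        have hcrH' : CrossOnly H' W U := by
          cases co
          · simp only [Bool.cond_false] at hH'; subst hH'; exact hcross'.swap
          · simp only [Bool.cond_true] at hH'; subst hH'; exact bipComplOn_cross.swap
        have agH0 : ∀ x ∈ W ∪ U, ∀ y ∈ W ∪ U, (H.Adj x y ↔ H'.Adj x y) := by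
          have hag1 : ∀ x ∈ unionParts k A ∪ (unionParts k B ∪ {v₁}),
              ∀ y ∈ unionParts k A ∪ (unionParts k B ∪ {v₁}), (H.Adj x y ↔ H'.Adj x y) := by
            intro x hx y hy
            exact ag₁ x (by rwa [Set.union_comm]) y (by rwa [Set.union_comm])
          have hag2 : ∀ x ∈ unionParts k C ∪ (unionParts k D ∪ {v₂}),
              ∀ y ∈ unionParts k C ∪ (unionParts k D ∪ {v₂}), (H.Adj x y ↔ H'.Adj x y) := by
            intro x hx y hy
            exact ag₂ x (by rwa [Set.union_comm]) y (by rwa [Set.union_comm])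
          exact chain_agree hdec hdec' hv₁ hv₁' hv₂ hv₂' hSA hSB hSC hSD hag1 hag2
            hcrH hcrH' hdisj.symm
        have agH : ∀ x ∈ U ∪ W, ∀ y ∈ U ∪ W, (H.Adj x y ↔ H'.Adj x y) := by
          intro x hx y hy
          exact agH0 x (by rwa [Set.union_comm]) y (by rwa [Set.union_comm])
        cases co
        · simp only [Bool.cond_false] at hH hH'
          subst hH hH'
          exact ⟨rfl, rfl, rfl, rfl, agH⟩
        · simp only [Bool.cond_true] at hH hH'
          subst hH hH'
          exact ⟨rfl, rfl, rfl, rfl, flip_agree hdisj hcross hcross' agH⟩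


set_option maxHeartbeats 1000000 in
set_option synthInstance.maxHeartbeats 100000 in
/-- There is a constant `C > 0` such that for every `n ≥ 2` the number of
labelled bipartite graphs on `{1, …, n}`, given together with a bipartition of `{1, …, n}`
into two independent parts, that are chain-decomposable is at most `n ^ (C * n)`. -/
theorem upperBound_count_chainDecomposable :
    ∃ C : ℝ, 0 < C ∧ ∀ n : ℕ, 2 ≤ n →
      (({p : SimpleGraph (Fin n) × Set (Fin n) × Set (Fin n) |
          IsBipartition p.1 p.2.1 p.2.2 ∧ ChainDecomposable p.1 p.2.1 p.2.2}).ncard : ℝ) ≤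
        (n : ℝ) ^ (C * n) := by
  classical
  refine ⟨170, by norm_num, ?_⟩
  intro n hn
  set S := {p : SimpleGraph (Fin n) × Set (Fin n) × Set (Fin n) |
      IsBipartition p.1 p.2.1 p.2.2 ∧ ChainDecomposable p.1 p.2.1 p.2.2} with hS
  have hcode : ∀ p : SimpleGraph (Fin n) × Set (Fin n) × Set (Fin n),
      ∃ L : List (Lab n), p ∈ S → (Enc L p.1 p.2.1 p.2.2 ∧ L.length ≤ Bnd n) := by
    intro p
    by_cases hp : p ∈ S
    · obtain ⟨hbip, hcd⟩ := hp
      have hcross : CrossOnly p.1 p.2.1 p.2.2 := fun x _ y _ had => hbip.cross had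
      obtain ⟨L, hL, hlen⟩ := exists_code hcd hbip.disjoint hcross
      refine ⟨L, fun _ => ⟨hL, ?_⟩⟩
      have hcard : (p.2.1 ∪ p.2.2).ncard = n := by
        rw [hbip.union_eq, Set.ncard_univ, Nat.card_eq_fintype_card, Fintype.card_fin]
      rwa [hcard] at hlen
    · exact ⟨[], fun hc => absurd hc hp⟩
  choose f hf using hcode
  set ψ : (SimpleGraph (Fin n) × Set (Fin n) × Set (Fin n)) →
      (Fin (20 * n + 1) → Option (Lab n)) := fun p i => (f p)[(i : ℕ)]? with hψ
  have hinj : Set.InjOn ψ S := by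
    intro p hp q hq hpq
    have hlenp : (f p).length ≤ 20 * n := le_trans (hf p hp).2 (Bnd_le n)
    have hlenq : (f q).length ≤ 20 * n := le_trans (hf q hq).2 (Bnd_le n)
    have hfeq : f p = f q := by
      apply List.ext_getElem?
      intro i
      rcases Nat.lt_or_ge i (20 * n + 1) with hi | hi
      · exact congrFun hpq ⟨i, hi⟩
      · rw [List.getElem?_eq_none (by omega), List.getElem?_eq_none (by omega)]
    obtain ⟨-, -, hU, hW, hag⟩ :=
      enc_det (hf p hp).1 (hfeq ▸ (hf q hq).1) (T₁ := []) (T₂ := []) (by simp)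
    have huniv : p.2.1 ∪ p.2.2 = Set.univ := hp.1.union_eq
    have hG : p.1 = q.1 := by
      apply SimpleGraph.ext
      funext x y
      exact propext (hag x (by rw [huniv]; trivial) y (by rw [huniv]; trivial))
    have h2 : p.2 = q.2 := Prod.ext hU hW
    exact Prod.ext hG h2
  have h1 : S.ncard ≤ Fintype.card (Fin (20 * n + 1) → Option (Lab n)) := by
    calc S.ncard = (ψ '' S).ncard := (Set.ncard_image_of_injOn hinj).symm
      _ ≤ (Set.univ : Set (Fin (20 * n + 1) → Option (Lab n))).ncard :=
          Set.ncard_le_ncard (Set.subset_univ _) (Set.toFinite _)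
      _ = Fintype.card _ := by rw [Set.ncard_univ, Nat.card_eq_fintype_card]
  have h2 : Fintype.card (Fin (20 * n + 1) → Option (Lab n)) =
      (Fintype.card (Lab n) + 1) ^ (20 * n + 1) := by
    rw [Fintype.card_fun, Fintype.card_option, Fintype.card_fin]
  have h3 : Fintype.card (Lab n) + 1 ≤ n ^ 8 := by
    have hc : Fintype.card (Lab n) = n * 2 + 2 * (2 * 2) * (n * (n * (n + 2))) := by
      simp only [Lab, Fintype.card_sum, Fintype.card_prod, Fintype.card_bool, Fintype.card_fin]
      ring
    rw [hc]
    have b1 : 2 * n ≤ n ^ 3 := by nlinarith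
    have b2 : 1 ≤ n ^ 3 := Nat.one_le_iff_ne_zero.2 (by positivity)
    have b3 : 16 * n ^ 2 ≤ 8 * n ^ 3 := by nlinarith
    have b4 : 32 * n ^ 3 ≤ n ^ 8 := by
      calc 32 * n ^ 3 = 2 ^ 5 * n ^ 3 := by norm_num
        _ ≤ n ^ 5 * n ^ 3 := Nat.mul_le_mul_right _ (Nat.pow_le_pow_left hn 5)
        _ = n ^ 8 := by ring
    have hr : n * 2 + 2 * (2 * 2) * (n * (n * (n + 2))) + 1
        = 8 * n ^ 3 + 16 * n ^ 2 + 2 * n + 1 := by ring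
    rw [hr]
    linarith [b1, b2, b3, b4]
  have h4 : S.ncard ≤ n ^ (170 * n) := by
    calc S.ncard ≤ (Fintype.card (Lab n) + 1) ^ (20 * n + 1) := by rw [← h2]; exact h1
      _ ≤ (n ^ 8) ^ (20 * n + 1) := Nat.pow_le_pow_left h3 _
      _ = n ^ (8 * (20 * n + 1)) := by rw [← pow_mul]
      _ ≤ n ^ (170 * n) := Nat.pow_le_pow_right (by omega) (by omega)
  have hcast : ((S.ncard : ℕ) : ℝ) ≤ ((n ^ (170 * n) : ℕ) : ℝ) := Nat.cast_le.2 h4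
  have he : ((n ^ (170 * n) : ℕ) : ℝ) = (n : ℝ) ^ ((170 : ℝ) * (n : ℝ)) := by
    have h5 : ((n ^ (170 * n) : ℕ) : ℝ) = (n : ℝ) ^ (170 * n : ℕ) := by push_cast; ring
    rw [h5, ← Real.rpow_natCast (n : ℝ) (170 * n)]
    congr 1
    push_cast
    ring
  calc ((S.ncard : ℕ) : ℝ) ≤ ((n ^ (170 * n) : ℕ) : ℝ) := hcast
    _ = (n : ℝ) ^ ((170 : ℝ) * (n : ℝ)) := he
end

section
/- Let k ≥ 0 and let T be a k-decomposition tree of an n-element set. Then the number of leaves of T is at most 2^{n−1} if n ≤ k, and at most (n−k)·2^k if n ≥ k+1. -/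
universe u

/-- A rooted binary tree in which every node `v` carries a finite set label `S(v)`
and every internal node has exactly two children. -/
inductive STree (α : Type u) : Type u where
  | leaf (s : Finset α) : STree α
  | node (s : Finset α) (l r : STree α) : STree α

namespace STree

/-- The label `S(v)` of the root of the (sub)tree. -/
def label {α : Type u} : STree α → Finset α
  | leaf s => s
  | node s _ _ => s

/-- The number of leaves of the tree. -/
def numLeaves {α : Type u} : STree α → ℕ
  | leaf _ => 1
  | node _ l r => l.numLeaves + r.numLeaves

/-- The total number of nodes of the tree. -/
def numNodes {α : Type u} : STree α → ℕ
  | leaf _ => 1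
  | node _ l r => l.numNodes + r.numNodes + 1

/-- The local conditions of a `k`-decomposition tree: leaves are exactly the nodes whose
label is a singleton, and whenever `v₁, v₂` are the two children of `v` we have
`S(v₁) ∪ S(v₂) = S(v)`, `|S(v)| ≤ |S(v₁)| + |S(v₂)| ≤ |S(v)| + k`, and each of
`S(v₁) ∖ S(v₂)` and `S(v₂) ∖ S(v₁)` is non-empty. -/
def Valid {α : Type u} [DecidableEq α] (k : ℕ) : STree α → Prop
  | leaf s => s.card = 1
  | node s l r =>
      s.card ≠ 1 ∧
      l.label ∪ r.label = s ∧
      s.card ≤ l.label.card + r.label.card ∧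
      l.label.card + r.label.card ≤ s.card + k ∧
      (l.label \ r.label).Nonempty ∧ (r.label \ l.label).Nonempty ∧
      l.Valid k ∧ r.Valid k

/-- No node of the tree has label `A`. -/
def NoLabel {α : Type u} (A : Finset α) : STree α → Prop
  | leaf s => s ≠ A
  | node s l r => s ≠ A ∧ l.NoLabel A ∧ r.NoLabel A

/-- No node other than the root has label `A`. -/
def NoLabelBelowRoot {α : Type u} (A : Finset α) : STree α → Prop
  | leaf _ => True
  | node _ l r => l.NoLabel A ∧ r.NoLabel A

end STree

/-- `T` is a `k`-decomposition tree of the finite set `A`:  the root (and only the root)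
is labelled by `A`, leaves are exactly the nodes labelled by singletons, and the labels of
the two children of any internal node `v` cover `S(v)`, satisfy
`|S(v)| ≤ |S(v₁)| + |S(v₂)| ≤ |S(v)| + k`, and each has a private element. -/
def IsKDecompTree {α : Type u} [DecidableEq α] (k : ℕ) (A : Finset α) (T : STree α) : Prop :=
  T.label = A ∧ T.Valid k ∧ T.NoLabelBelowRoot A

def fBound (k n : ℕ) : ℕ := if n ≤ k then 2 ^ (n - 1) else (n - k) * 2 ^ k

lemma fBound_le (k n : ℕ) (h : n ≤ k) : fBound k n = 2 ^ (n - 1) := if_pos h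
lemma fBound_gt (k n : ℕ) (h : k < n) : fBound k n = (n - k) * 2 ^ k :=
  if_neg (by omega)

lemma fBound_one (k : ℕ) : fBound k 1 = 1 := by
  unfold fBound
  split_ifs with h
  · simp
  · interval_cases k; simp

lemma fBound_add (k n n₁ n₂ : ℕ) (h1 : 1 ≤ n₁) (h2 : 1 ≤ n₂)
    (hl1 : n₁ ≤ n - 1) (hl2 : n₂ ≤ n - 1) (hs : n₁ + n₂ ≤ n + k) (hn : 2 ≤ n) :
    fBound k n₁ + fBound k n₂ ≤ fBound k n := by
  rcases le_or_gt n k with hnk | hnk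
  · rw [fBound_le k n₁ (by omega), fBound_le k n₂ (by omega), fBound_le k n hnk]
    have e1 : 2 ^ (n₁ - 1) ≤ 2 ^ (n - 2) := Nat.pow_le_pow_right (by norm_num) (by omega)
    have e2 : 2 ^ (n₂ - 1) ≤ 2 ^ (n - 2) := Nat.pow_le_pow_right (by norm_num) (by omega)
    have : 2 ^ (n - 2) + 2 ^ (n - 2) = 2 ^ (n - 1) := by
      have : n - 1 = (n - 2) + 1 := by omega
      rw [this, pow_succ]; ring
    omega
  · rw [fBound_gt k n hnk]
    rcases le_or_gt n₁ k with h1k | h1k <;> rcases le_or_gt n₂ k with h2k | h2k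
    · rw [fBound_le k n₁ h1k, fBound_le k n₂ h2k]
      have hk : 1 ≤ k := le_trans h1 h1k
      have e1 : 2 ^ (n₁ - 1) ≤ 2 ^ (k - 1) := Nat.pow_le_pow_right (by norm_num) (by omega)
      have e2 : 2 ^ (n₂ - 1) ≤ 2 ^ (k - 1) := Nat.pow_le_pow_right (by norm_num) (by omega)
      obtain ⟨j, hj⟩ : ∃ j, k = j + 1 := ⟨k - 1, by omega⟩
      have e3 : 2 ^ (k - 1) + 2 ^ (k - 1) = 2 ^ k := by
        subst hj; simp [pow_succ]; ring
      have e4 : 2 ^ k ≤ (n - k) * 2 ^ k := Nat.le_mul_of_pos_left _ (by omega)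
      omega
    · rw [fBound_le k n₁ h1k, fBound_gt k n₂ h2k]
      have e1 : 2 ^ (n₁ - 1) ≤ 2 ^ k := Nat.pow_le_pow_right (by norm_num) (by omega)
      have e2 : (n₂ - k) * 2 ^ k ≤ (n - k - 1) * 2 ^ k :=
        Nat.mul_le_mul_right _ (by omega)
      obtain ⟨m, hm⟩ : ∃ m, n - k = m + 1 := ⟨n - k - 1, by omega⟩
      have e3 : (n - k - 1) * 2 ^ k + 2 ^ k = (n - k) * 2 ^ k := by
        have hm' : n - k - 1 = m := by omega
        rw [hm]; simp; ring
      omega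
    · rw [fBound_gt k n₁ h1k, fBound_le k n₂ h2k]
      have e1 : 2 ^ (n₂ - 1) ≤ 2 ^ k := Nat.pow_le_pow_right (by norm_num) (by omega)
      have e2 : (n₁ - k) * 2 ^ k ≤ (n - k - 1) * 2 ^ k :=
        Nat.mul_le_mul_right _ (by omega)
      obtain ⟨m, hm⟩ : ∃ m, n - k = m + 1 := ⟨n - k - 1, by omega⟩
      have e3 : (n - k - 1) * 2 ^ k + 2 ^ k = (n - k) * 2 ^ k := by
        have hm' : n - k - 1 = m := by omega
        rw [hm]; simp; ring
      omega
    · rw [fBound_gt k n₁ h1k, fBound_gt k n₂ h2k]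
      have : (n₁ - k) * 2 ^ k + (n₂ - k) * 2 ^ k = (n₁ - k + (n₂ - k)) * 2 ^ k := by ring
      rw [this]
      exact Nat.mul_le_mul_right _ (by omega)

lemma STree.numLeaves_le_fBound {α : Type u} [DecidableEq α] (k : ℕ) :
    ∀ T : STree α, T.Valid k → T.numLeaves ≤ fBound k T.label.card
  | .leaf s, h => by
      have hc : s.card = 1 := h
      simp [STree.numLeaves, STree.label, hc, fBound_one]
  | .node s l r, h => by
      obtain ⟨hne, hun, hlo, hhi, ⟨x, hx⟩, ⟨y, hy⟩, hvl, hvr⟩ := h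
      have ihl := STree.numLeaves_le_fBound k l hvl
      have ihr := STree.numLeaves_le_fBound k r hvr
      rw [Finset.mem_sdiff] at hx hy
      have hxs : x ∈ s := hun ▸ Finset.mem_union_left _ hx.1
      have hys : y ∈ s := hun ▸ Finset.mem_union_right _ hy.1
      have h1 : l.label ⊆ s.erase y := fun a ha => Finset.mem_erase.2
        ⟨fun e => hy.2 (e ▸ ha), hun ▸ Finset.mem_union_left _ ha⟩
      have h2 : r.label ⊆ s.erase x := fun a ha => Finset.mem_erase.2
        ⟨fun e => hx.2 (e ▸ ha), hun ▸ Finset.mem_union_right _ ha⟩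
      have hc1 : l.label.card ≤ s.card - 1 := by
        have := Finset.card_le_card h1
        rwa [Finset.card_erase_of_mem hys] at this
      have hc2 : r.label.card ≤ s.card - 1 := by
        have := Finset.card_le_card h2
        rwa [Finset.card_erase_of_mem hxs] at this
      have hp1 : 1 ≤ l.label.card := Finset.card_pos.2 ⟨x, hx.1⟩
      have hp2 : 1 ≤ r.label.card := Finset.card_pos.2 ⟨y, hy.1⟩
      have hn2 : 2 ≤ s.card := by
        have : 1 ≤ s.card := Finset.card_pos.2 ⟨x, hxs⟩
        omega
      have key := fBound_add k s.card l.label.card r.label.card hp1 hp2 hc1 hc2 hhi hn2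
      show l.numLeaves + r.numLeaves ≤ fBound k (STree.label (.node s l r)).card
      calc l.numLeaves + r.numLeaves
          ≤ fBound k l.label.card + fBound k r.label.card := Nat.add_le_add ihl ihr
        _ ≤ fBound k s.card := key

/-- If `T` is a `k`-decomposition tree of an `n`-element set, then the
number of leaves of `T` is at most `2 ^ (n - 1)` if `n ≤ k`, and at most
`(n - k) * 2 ^ k` if `n ≥ k + 1`. -/
theorem kDecompTree_numLeaves_le {α : Type u} [DecidableEq α] (k : ℕ) (A : Finset α)
    (T : STree α) (hT : IsKDecompTree k A T) :
    (A.card ≤ k → T.numLeaves ≤ 2 ^ (A.card - 1)) ∧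
    (k + 1 ≤ A.card → T.numLeaves ≤ (A.card - k) * 2 ^ k) := by
  obtain ⟨hlab, hval, -⟩ := hT
  have h := STree.numLeaves_le_fBound k T hval
  rw [hlab] at h
  constructor
  · intro hle
    rwa [fBound_le k A.card hle] at h
  · intro hge
    rwa [fBound_gt k A.card (by omega)] at h
end

section
/- Let k ≥ 0 and let T be a k-decomposition tree of an n-element set. Then the total number of nodes of T is at most 2^n − 1 if n ≤ k, and at most (n−k)·2^{k+1} − 1 if n ≥ k+1. -/
universe u

def gBound (k n : ℕ) : ℕ := if n ≤ k + 1 then 2 ^ (n - 1) else (n - k) * 2 ^ k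

lemma gBound_add (k a b n : ℕ) (ha : 1 ≤ a) (hb : 1 ≤ b) (han : a < n) (hbn : b < n)
    (hn : n ≤ a + b) (hk : a + b ≤ n + k) : gBound k a + gBound k b ≤ gBound k n := by
  have hP : 1 ≤ 2 ^ k := Nat.one_le_two_pow
  by_cases h1 : n ≤ k + 1
  · unfold gBound
    rw [if_pos (by omega : a ≤ k + 1), if_pos (by omega : b ≤ k + 1), if_pos h1]
    have h2 : 2 ≤ n := by omega
    calc 2 ^ (a - 1) + 2 ^ (b - 1)
        ≤ 2 ^ (n - 2) + 2 ^ (n - 2) :=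
          add_le_add (Nat.pow_le_pow_right (by norm_num) (by omega))
            (Nat.pow_le_pow_right (by norm_num) (by omega))
      _ = 2 ^ (n - 1) := by
          rw [← two_mul, ← pow_succ']
          congr 1
          omega
  · have key : ∀ c, 1 ≤ c → gBound k c ≤ (max c (k + 1) - k) * 2 ^ k := by
      intro c hc
      unfold gBound
      split_ifs with h
      · have hmax : max c (k + 1) - k = 1 := by omega
        rw [hmax, one_mul]
        exact Nat.pow_le_pow_right (by norm_num) (by omega)
      · have hmax : max c (k + 1) = c := by omega
        rw [hmax]
    have hgn : gBound k n = (n - k) * 2 ^ k := by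
      unfold gBound
      rw [if_neg h1]
    rw [hgn]
    calc gBound k a + gBound k b
        ≤ (max a (k + 1) - k) * 2 ^ k + (max b (k + 1) - k) * 2 ^ k :=
          add_le_add (key a ha) (key b hb)
      _ = ((max a (k + 1) - k) + (max b (k + 1) - k)) * 2 ^ k := (add_mul _ _ _).symm
      _ ≤ (n - k) * 2 ^ k := Nat.mul_le_mul_right _ (by omega)

lemma STree.valid_card_pos {α : Type u} [DecidableEq α] {k : ℕ} :
    ∀ {T : STree α}, T.Valid k → 1 ≤ T.label.card := by
  intro T h
  induction T with
  | leaf s => simp only [STree.Valid] at h; simp [STree.label, h]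
  | node s l r ihl ihr =>
    obtain ⟨_, h2, _, _, _, _, hl, _⟩ := h
    have hsub : l.label ⊆ s := h2 ▸ Finset.subset_union_left
    exact le_trans (ihl hl) (Finset.card_le_card hsub)

lemma STree.numNodes_eq {α : Type u} (T : STree α) : T.numNodes + 1 = 2 * T.numLeaves := by
  induction T with
  | leaf s => simp [STree.numNodes, STree.numLeaves]
  | node s l r ihl ihr => simp only [STree.numNodes, STree.numLeaves]; omega

lemma STree.numLeaves_le {α : Type u} [DecidableEq α] {k : ℕ} :
    ∀ {T : STree α}, T.Valid k → T.numLeaves ≤ gBound k T.label.card := by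
  intro T h
  induction T with
  | leaf s =>
    simp only [STree.Valid] at h
    simp [STree.numLeaves, STree.label, h, gBound]
  | node s l r ihl ihr =>
    obtain ⟨h1, h2, h3, h4, h5, h6, hl, hr⟩ := h
    have hal : l.label ⊆ s := h2 ▸ Finset.subset_union_left
    have har : r.label ⊆ s := h2 ▸ Finset.subset_union_right
    have ha1 : 1 ≤ l.label.card := STree.valid_card_pos hl
    have hb1 : 1 ≤ r.label.card := STree.valid_card_pos hr
    have hals : l.label.card < s.card := by
      obtain ⟨x, hx⟩ := h6
      rw [Finset.mem_sdiff] at hx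
      exact Finset.card_lt_card
        ((Finset.ssubset_iff_of_subset hal).mpr ⟨x, har hx.1, hx.2⟩)
    have hbrs : r.label.card < s.card := by
      obtain ⟨x, hx⟩ := h5
      rw [Finset.mem_sdiff] at hx
      exact Finset.card_lt_card
        ((Finset.ssubset_iff_of_subset har).mpr ⟨x, hal hx.1, hx.2⟩)
    calc (STree.node s l r).numLeaves = l.numLeaves + r.numLeaves := rfl
      _ ≤ gBound k l.label.card + gBound k r.label.card := add_le_add (ihl hl) (ihr hr)
      _ ≤ gBound k s.card := gBound_add k _ _ _ ha1 hb1 hals hbrs h3 h4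

/-- If `T` is a `k`-decomposition tree of an `n`-element set, then the
total number of nodes of `T` is at most `2 ^ n - 1` if `n ≤ k`, and at most
`(n - k) * 2 ^ (k + 1) - 1` if `n ≥ k + 1`. -/
theorem kDecompTree_numNodes_le {α : Type u} [DecidableEq α] (k : ℕ) (A : Finset α)
    (T : STree α) (hT : IsKDecompTree k A T) :
    (A.card ≤ k → T.numNodes ≤ 2 ^ A.card - 1) ∧
    (k + 1 ≤ A.card → T.numNodes ≤ (A.card - k) * 2 ^ (k + 1) - 1) := by
  obtain ⟨hlab, hval, _⟩ := hT
  have hn1 : 1 ≤ A.card := hlab ▸ STree.valid_card_pos hval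
  have hL : T.numLeaves ≤ gBound k A.card := hlab ▸ STree.numLeaves_le hval
  have hNN : T.numNodes + 1 = 2 * T.numLeaves := T.numNodes_eq
  constructor
  · intro hk
    have hg : gBound k A.card = 2 ^ (A.card - 1) := by
      unfold gBound; rw [if_pos (by omega)]
    have hpow : 2 * 2 ^ (A.card - 1) = 2 ^ A.card := by
      rw [← pow_succ']; congr 1; omega
    omega
  · intro hk
    have hg : gBound k A.card ≤ (A.card - k) * 2 ^ k := by
      unfold gBound
      split_ifs with h
      · have : A.card = k + 1 := by omega
        simp [this]
      · exact le_refl _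
    have hpow : (A.card - k) * 2 ^ (k + 1) = 2 * ((A.card - k) * 2 ^ k) := by ring
    omega
end
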